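/- Let f:[0,1]→[0,1] be a convex, strictly increasing, continuously differentiable function with f(1)=1 and f not the identity, let α∈(0,1), and let p₁,p₂∈[0,1] with p₁+p₂≤1 and p₂>0. Then the equation α(1−f(1−s)) = s(1−(1−α)p₁) − (1−α)p₂ has a unique solution s in the interval [0,1], and this solution lies in (0,1]. -/

import Mathlib

open Set

/-- unique fixed point of the catalytic branching equation. -/
theorem stmt_0 (f : ℝ → ℝ) (α p₁ p₂ : ℝ)
    (hconv : ConvexOn ℝ (Icc 0 1) f)
    (hmono : StrictMonoOn f (Icc 0 1))
    (hdiff : ContDiffOn ℝ 1 f (Icc 0 1))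
    (hmaps : MapsTo f (Icc 0 1) (Icc 0 1))
    (hf1 : f 1 = 1)
    (hne : ∃ t ∈ Icc (0:ℝ) 1, f t ≠ t)
    (hα : α ∈ Ioo (0:ℝ) 1)
    (hp₁ : p₁ ∈ Icc (0:ℝ) 1) (hp₂ : p₂ ∈ Icc (0:ℝ) 1)
    (hsum : p₁ + p₂ ≤ 1) (hp₂pos : 0 < p₂) :
    (∃! s : ℝ, s ∈ Icc (0:ℝ) 1 ∧
        α * (1 - f (1 - s)) = s * (1 - (1 - α) * p₁) - (1 - α) * p₂) ∧
    (∀ s ∈ Icc (0:ℝ) 1,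
        α * (1 - f (1 - s)) = s * (1 - (1 - α) * p₁) - (1 - α) * p₂ →
        s ∈ Ioc (0:ℝ) 1) := by
  obtain ⟨hα0, hα1⟩ := hα
  set d : ℝ := (1 - α) * p₂ with hd
  have hdpos : 0 < d := mul_pos (by linarith) hp₂pos
  set h : ℝ → ℝ := fun s => α * (1 - f (1 - s)) - (s * (1 - (1 - α) * p₁) - d) with hh
  have hf0 : 0 ≤ f 0 := (hmaps (by norm_num : (0:ℝ) ∈ Icc 0 1)).1
  have h0 : h 0 = d := by simp [hh, hf1]
  have h1 : h 1 ≤ 0 := by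
    have : h 1 = α * (1 - f 0) - ((1 - (1 - α) * p₁) - d) := by norm_num [hh]
    rw [this, hd]
    nlinarith [hp₁.1, hp₂.1]
  have hcont : ContinuousOn h (Icc 0 1) := by
    apply ContinuousOn.sub
    · apply ContinuousOn.mul continuousOn_const
      apply ContinuousOn.sub continuousOn_const
      apply hdiff.continuousOn.comp (by fun_prop)
      intro x hx
      exact ⟨by linarith [hx.2], by linarith [hx.1]⟩
    · fun_prop
  -- no two distinct zeros of h in [0,1]
  have key : ∀ a ∈ Icc (0:ℝ) 1, ∀ b ∈ Icc (0:ℝ) 1, h a = 0 → h b = 0 → a < b → False := by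
    intro a ha b hb hha hhb hab
    have hbpos : 0 < b := lt_of_le_of_lt ha.1 hab
    set lam : ℝ := (b - a) / b with hl
    have hlpos : 0 < lam := div_pos (by linarith) hbpos
    have hlle : lam ≤ 1 := by
      rw [hl, div_le_one hbpos]; linarith [ha.1]
    have hcomb : lam * 1 + (1 - lam) * (1 - b) = 1 - a := by
      field_simp [hl]
      rw [hl]; linear_combination div_mul_cancel₀ (b - a) hbpos.ne'
    have haeq : a = (1 - lam) * b := by
      field_simp [hl]
      rw [hl, sub_mul, div_mul_cancel₀ _ hbpos.ne']; ring
    have hmemb : (1 - b) ∈ Icc (0:ℝ) 1 := ⟨by linarith [hb.2], by linarith [hb.1]⟩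
    have hmem1 : (1:ℝ) ∈ Icc (0:ℝ) 1 := by norm_num
    have hcx := hconv.2 hmem1 hmemb hlpos.le (by linarith : (0:ℝ) ≤ 1 - lam)
      (by ring : lam + (1 - lam) = 1)
    rw [smul_eq_mul, smul_eq_mul, smul_eq_mul, smul_eq_mul, hcomb, hf1] at hcx
    -- hcx : f (1 - a) ≤ lam + (1 - lam) * f (1 - b)
    have hha' : α * (1 - f (1 - a)) - (a * (1 - (1 - α) * p₁) - d) = 0 := hha
    have hhb' : α * (1 - f (1 - b)) - (b * (1 - (1 - α) * p₁) - d) = 0 := hhb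
    have hm := mul_le_mul_of_nonneg_left hcx hα0.le
    have e3 : (1 - lam) * (α * (1 - f (1 - b)) - (b * (1 - (1 - α) * p₁) - d)) = 0 := by
      rw [hhb']; ring
    have e4 : a * (1 - (1 - α) * p₁) = (1 - lam) * (b * (1 - (1 - α) * p₁)) := by
      rw [haeq]; ring
    nlinarith [hm, e3, e4, hha', mul_pos hlpos hdpos]
  have h0le : (0:ℝ) ∈ Icc (h 1) (h 0) := ⟨h1, by rw [h0]; exact hdpos.le⟩
  obtain ⟨s, hs, hsval⟩ := intermediate_value_Icc' (by norm_num : (0:ℝ) ≤ 1) hcont h0le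
  have hseq : α * (1 - f (1 - s)) = s * (1 - (1 - α) * p₁) - (1 - α) * p₂ := by
    have := hsval
    simp only [hh] at this
    linarith [this.ge, this.le]
  constructor
  · refine ⟨s, ⟨hs, hseq⟩, ?_⟩
    intro t ⟨ht, hteq⟩
    have htz : h t = 0 := by simp only [hh]; linarith [hteq]
    rcases lt_trichotomy t s with hlt | heq | hgt
    · exact absurd (key t ht s hs htz hsval hlt) (by simp)
    · exact heq
    · exact absurd (key s hs t ht hsval htz hgt) (by simp)
  · intro t ht hteq
    have htz : h t = 0 := by simp only [hh]; linarith [hteq]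
    have : t ≠ 0 := by
      intro h00
      rw [h00, h0] at htz
      exact hdpos.ne' htz
    exact ⟨lt_of_le_of_ne ht.1 (Ne.symm this), ht.2⟩
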